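/- Let (α, 𝒜) be a measurable space, μ a probability measure on α, A : α → ℝ a bounded measurable function, and β > 0 a real number. Set Z = ∫ exp(A(a)/β) dμ(a), and define the probability measure ν* on α by dν*/dμ = exp(A/β)/Z. Then KL(ν*‖μ) is finite and ∫ A(a) dν*(a) − β·KL(ν*‖μ) = β·log Z; in particular, ν* attains the supremum of ν ↦ ∫ A dν − β·KL(ν‖μ) over probability measures ν absolutely continuous with respect to μ with finite KL(ν‖μ). -/

import Mathlib

open MeasureTheory

/-- The Kullback–Leibler divergence `KL(ν‖μ) = ∫ log(dν/dμ) dν`. -/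
noncomputable def klDivR {α : Type*} [MeasurableSpace α] (ν μ : Measure α) : ℝ :=
  ∫ a, Real.log ((ν.rnDeriv μ a).toReal) ∂ν

/-- Attainment direction of the variational characterization (Remark 3.1):
the measure `ν* ∝ exp(A/β)·μ` is a probability measure with finite KL
divergence, attains value `β·log Z`, and maximizes
`ν ↦ ∫ A dν − β·KL(ν‖μ)` over probability measures `ν ≪ μ` with finite KL. -/
theorem kl_variational_attainment
    {α : Type*} [MeasurableSpace α]
    (μ : Measure α) [IsProbabilityMeasure μ]
    (A : α → ℝ) (hA_meas : Measurable A) (hA_bdd : ∃ C : ℝ, ∀ a, |A a| ≤ C)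
    (β : ℝ) (hβ : 0 < β)
    (Z : ℝ) (hZ : Z = ∫ a, Real.exp (A a / β) ∂μ)
    (νstar : Measure α)
    (hνstar : νstar = μ.withDensity (fun a => ENNReal.ofReal (Real.exp (A a / β) / Z))) :
    IsProbabilityMeasure νstar
    ∧ Integrable (fun a => Real.log ((νstar.rnDeriv μ a).toReal)) νstar
    ∧ ∫ a, A a ∂νstar - β * klDivR νstar μ = β * Real.log Z
    ∧ ∀ (ν : Measure α), IsProbabilityMeasure ν → ν ≪ μ →
        Integrable (fun a => Real.log ((ν.rnDeriv μ a).toReal)) ν →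
        ∫ a, A a ∂ν - β * klDivR ν μ ≤ ∫ a, A a ∂νstar - β * klDivR νstar μ := by
  obtain ⟨C, hC⟩ := hA_bdd
  have hexp_meas : Measurable fun a => Real.exp (A a / β) := (hA_meas.div_const β).exp
  have hexp_bdd : ∀ a, Real.exp (A a / β) ≤ Real.exp (C / β) := fun a =>
    Real.exp_le_exp.2 (by gcongr; exact (abs_le.1 (hC a)).2)
  have hexp_int : Integrable (fun a => Real.exp (A a / β)) μ := by
    refine (integrable_const (Real.exp (C / β))).mono' hexp_meas.aestronglyMeasurable ?_
    filter_upwards with a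
    rw [Real.norm_eq_abs, abs_of_pos (Real.exp_pos _)]
    exact hexp_bdd a
  have hZpos : 0 < Z := by
    rw [hZ]
    have h1 : (0:ℝ) < Real.exp (-C / β) := Real.exp_pos _
    have h2 : ∫ a, Real.exp (-C / β) ∂μ ≤ ∫ a, Real.exp (A a / β) ∂μ := by
      refine integral_mono (integrable_const _) hexp_int fun a => ?_
      exact Real.exp_le_exp.2 (by gcongr; linarith [(abs_le.1 (hC a)).1])
    simpa using lt_of_lt_of_le (by simpa using h1) h2
  set c : α → ℝ := fun a => Real.exp (A a / β) / Z with hc_def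
  have hc_meas : Measurable c := hexp_meas.div_const Z
  have hc_nonneg : ∀ a, 0 ≤ c a := fun a => div_nonneg (Real.exp_pos _).le hZpos.le
  have hc_pos : ∀ a, 0 < c a := fun a => div_pos (Real.exp_pos _) hZpos
  have hc_int : Integrable c μ := hexp_int.div_const Z
  have hc_int1 : ∫ a, c a ∂μ = 1 := by
    simp only [hc_def]
    rw [integral_div, ← hZ, div_self hZpos.ne']
  have hlin : ∫⁻ a, ENNReal.ofReal (c a) ∂μ = 1 := by
    rw [← ofReal_integral_eq_lintegral_ofReal hc_int (Filter.Eventually.of_forall hc_nonneg),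
      hc_int1, ENNReal.ofReal_one]
  have hν_ac : νstar ≪ μ := hνstar ▸ withDensity_absolutelyContinuous μ _
  have hprob : IsProbabilityMeasure νstar := by
    constructor
    rw [hνstar, withDensity_apply _ MeasurableSet.univ, setLIntegral_univ, hlin]
  have hrn : νstar.rnDeriv μ =ᵐ[μ] fun a => ENNReal.ofReal (c a) := by
    rw [hνstar]
    exact Measure.rnDeriv_withDensity μ (hc_meas.ennreal_ofReal)
  have hlog : (fun a => Real.log ((νstar.rnDeriv μ a).toReal))
      =ᵐ[νstar] fun a => A a / β - Real.log Z := by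
    filter_upwards [hν_ac.ae_eq hrn] with a ha
    rw [ha, ENNReal.toReal_ofReal (hc_nonneg a), hc_def,
      Real.log_div (Real.exp_ne_zero _) hZpos.ne', Real.log_exp]
  have hA_int : ∀ (ρ : Measure α) [IsProbabilityMeasure ρ], Integrable A ρ := by
    intro ρ _
    refine (integrable_const C).mono' hA_meas.aestronglyMeasurable ?_
    filter_upwards with a using (Real.norm_eq_abs (A a)) ▸ hC a
  haveI := hprob
  have hA_int_star : Integrable A νstar := hA_int νstar
  have hlog_int : Integrable (fun a => Real.log ((νstar.rnDeriv μ a).toReal)) νstar := by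
    refine Integrable.congr ?_ hlog.symm
    exact (hA_int_star.div_const β).sub (integrable_const _)
  have hKLstar : klDivR νstar μ = (∫ a, A a ∂νstar) / β - Real.log Z := by
    unfold klDivR
    rw [integral_congr_ae hlog,
      integral_sub (hA_int_star.div_const β)
        (integrable_const _),
      integral_div]
    have : ∫ (_ : α), Real.log Z ∂νstar = Real.log Z := by
      simp [hprob.measure_univ]
    rw [this]
  have hval : ∫ a, A a ∂νstar - β * klDivR νstar μ = β * Real.log Z := by
    rw [hKLstar]; field_simp; ring
  refine ⟨hprob, hlog_int, hval, ?_⟩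
  intro ν hνprob hνac hgint
  haveI := hνprob
  rw [hval]
  -- key Gibbs inequality: ∫ A dν − β KL(ν‖μ) ≤ β log Z
  set f : α → ℝ := fun a => (ν.rnDeriv μ a).toReal with hf_def
  have hf_meas : Measurable f := (Measure.measurable_rnDeriv ν μ).ennreal_toReal
  set ψ : α → ℝ := fun a => c a / f a with hψ_def
  have hψ_nonneg : ∀ a, 0 ≤ ψ a := fun a => div_nonneg (hc_nonneg a) ENNReal.toReal_nonneg
  have hψ_meas : Measurable ψ := hc_meas.div hf_meas
  -- ν-a.e. positivity and finiteness of rnDeriv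
  have hfin : ∀ᵐ a ∂ν, ν.rnDeriv μ a < ⊤ := hνac.ae_le (Measure.rnDeriv_lt_top ν μ)
  have hpos : ∀ᵐ a ∂ν, 0 < ν.rnDeriv μ a := Measure.rnDeriv_pos hνac
  have hfpos : ∀ᵐ a ∂ν, 0 < f a := by
    filter_upwards [hfin, hpos] with a h1 h2
    exact ENNReal.toReal_pos h2.ne' h1.ne
  -- lintegral bound
  have hlint : ∫⁻ a, ENNReal.ofReal (ψ a) ∂ν ≤ 1 := by
    rw [← lintegral_rnDeriv_mul hνac (hψ_meas.ennreal_ofReal.aemeasurable)]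
    rw [← hlin]
    refine lintegral_mono_ae ?_
    filter_upwards [Measure.rnDeriv_lt_top ν μ] with a hfin'
    by_cases h0 : ν.rnDeriv μ a = 0
    · simp [h0]
    · have hfa : 0 < f a := ENNReal.toReal_pos h0 hfin'.ne
      have : ENNReal.ofReal (ψ a) = ENNReal.ofReal (c a) / ν.rnDeriv μ a := by
        rw [hψ_def, ENNReal.ofReal_div_of_pos hfa, hf_def,
          ENNReal.ofReal_toReal hfin'.ne]
      rw [this, ENNReal.mul_div_cancel h0 hfin'.ne]
  have hψ_int : Integrable ψ ν := by
    refine ⟨hψ_meas.aestronglyMeasurable, ?_⟩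
    rw [hasFiniteIntegral_iff_ofReal (Filter.Eventually.of_forall hψ_nonneg)]
    exact lt_of_le_of_lt hlint ENNReal.one_lt_top
  have hψ_int_le : ∫ a, ψ a ∂ν ≤ 1 := by
    rw [integral_eq_lintegral_of_nonneg_ae (Filter.Eventually.of_forall hψ_nonneg)
      hψ_meas.aestronglyMeasurable]
    calc (∫⁻ a, ENNReal.ofReal (ψ a) ∂ν).toReal ≤ (1 : ENNReal).toReal :=
          ENNReal.toReal_mono ENNReal.one_ne_top hlint
      _ = 1 := by simp
  -- pointwise log inequality
  have hpt : ∀ᵐ a ∂ν, A a / β - Real.log (f a) - Real.log Z ≤ ψ a - 1 := by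
    filter_upwards [hfpos] with a hfa
    have hψa : 0 < ψ a := div_pos (hc_pos a) hfa
    have hlog_le : Real.log (ψ a) ≤ ψ a - 1 := Real.log_le_sub_one_of_pos hψa
    have : Real.log (ψ a) = A a / β - Real.log Z - Real.log (f a) := by
      rw [hψ_def, Real.log_div (hc_pos a).ne' hfa.ne', hc_def,
        Real.log_div (Real.exp_ne_zero _) hZpos.ne', Real.log_exp]
    linarith [this ▸ hlog_le]
  have hA_int_ν : Integrable A ν := hA_int ν
  have hconst_int : Integrable (fun _ : α => Real.log Z) ν :=
    integrable_const _
  have hLHS_int : Integrable (fun a => A a / β - Real.log (f a) - Real.log Z) ν :=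
    ((hA_int_ν.div_const β).sub hgint).sub hconst_int
  have hint_le : ∫ a, (A a / β - Real.log (f a) - Real.log Z) ∂ν ≤ ∫ a, (ψ a - 1) ∂ν :=
    integral_mono_ae hLHS_int (hψ_int.sub (integrable_const _)) hpt
  have hRHS : ∫ a, (ψ a - 1) ∂ν ≤ 0 := by
    rw [integral_sub hψ_int (integrable_const _)]
    simp only [integral_const, hνprob.measure_univ]
    simp only [ENNReal.toReal_one, smul_eq_mul, one_mul, probReal_univ]
    linarith
  have hLHS : ∫ a, (A a / β - Real.log (f a) - Real.log Z) ∂ν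
      = (∫ a, A a ∂ν) / β - klDivR ν μ - Real.log Z := by
    have h1 : ∫ a, (A a / β - Real.log (f a) - Real.log Z) ∂ν
        = (∫ a, (A a / β - Real.log (f a)) ∂ν) - ∫ _, Real.log Z ∂ν :=
      integral_sub ((hA_int_ν.div_const β).sub hgint) hconst_int
    have h2 : ∫ a, (A a / β - Real.log (f a)) ∂ν = (∫ a, A a ∂ν) / β - klDivR ν μ := by
      rw [integral_sub (hA_int_ν.div_const β) hgint, integral_div]; rfl
    rw [h1, h2]
    simp [hνprob.measure_univ]
  have key : (∫ a, A a ∂ν) / β - klDivR ν μ - Real.log Z ≤ 0 := by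
    rw [← hLHS]; linarith
  have : (∫ a, A a ∂ν) / β ≤ klDivR ν μ + Real.log Z := by linarith
  calc ∫ a, A a ∂ν - β * klDivR ν μ
      = β * ((∫ a, A a ∂ν) / β - klDivR ν μ) := by field_simp
    _ ≤ β * Real.log Z := by
        refine mul_le_mul_of_nonneg_left ?_ hβ.le
        linarith
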